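/- The symmetry-broken Drach integrals I₁ = (p₁²/m² − p₂²/n²)/(u₁² − u₂²) − α(u₁² + u₂²) − β(u₁² + u₁u₂ + u₂²)/(u₁ + u₂) − γ/(u₁ + u₂) and I₂ = (u₂²p₁²/m² − u₁²p₂²/n²)/(u₁² − u₂²) − αu₁²u₂² − βu₁²u₂²/(u₁ + u₂) + γu₁u₂/(u₁ + u₂) Poisson-commute for all nonzero constants m, n. -/

import Mathlib

/-- Canonical Poisson bracket of two functions on `T*ℝ²` with canonical
coordinates `(u₁, u₂, p₁, p₂)`. -/
noncomputable def poissonBracket (F G : ℝ → ℝ → ℝ → ℝ → ℝ) (u1 u2 p1 p2 : ℝ) : ℝ :=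
  deriv (fun x => F x u2 p1 p2) u1 * deriv (fun x => G u1 u2 x p2) p1
  - deriv (fun x => F u1 u2 x p2) p1 * deriv (fun x => G x u2 p1 p2) u1
  + deriv (fun x => F u1 x p1 p2) u2 * deriv (fun x => G u1 u2 p1 x) p2
  - deriv (fun x => F u1 u2 p1 x) p2 * deriv (fun x => G u1 x p1 p2) u2

/-- Symmetry-broken Drach integral `I₁`. -/
noncomputable def drachI1mn (α β γ m n : ℝ) : ℝ → ℝ → ℝ → ℝ → ℝ := fun u1 u2 p1 p2 =>
  (p1 ^ 2 / m ^ 2 - p2 ^ 2 / n ^ 2) / (u1 ^ 2 - u2 ^ 2) - α * (u1 ^ 2 + u2 ^ 2)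
    - β * (u1 ^ 2 + u1 * u2 + u2 ^ 2) / (u1 + u2) - γ / (u1 + u2)

/-- Symmetry-broken Drach integral `I₂`. -/
noncomputable def drachI2mn (α β γ m n : ℝ) : ℝ → ℝ → ℝ → ℝ → ℝ := fun u1 u2 p1 p2 =>
  (u2 ^ 2 * p1 ^ 2 / m ^ 2 - u1 ^ 2 * p2 ^ 2 / n ^ 2) / (u1 ^ 2 - u2 ^ 2)
    - α * u1 ^ 2 * u2 ^ 2 - β * u1 ^ 2 * u2 ^ 2 / (u1 + u2)
    + γ * u1 * u2 / (u1 + u2)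

set_option maxHeartbeats 2000000 in
/-- The symmetry-broken Drach integrals Poisson-commute for all nonzero
constants `m`, `n`. -/
theorem drach_mn_integrals_commute (α β γ m n : ℝ) (hm : m ≠ 0) (hn : n ≠ 0)
    (u1 u2 p1 p2 : ℝ) (hne : u1 ^ 2 ≠ u2 ^ 2) (hsum : u1 + u2 ≠ 0) :
    poissonBracket (drachI1mn α β γ m n) (drachI2mn α β γ m n) u1 u2 p1 p2 = 0 := by
  have hD : u1 ^ 2 - u2 ^ 2 ≠ 0 := sub_ne_zero.mpr hne
  have hx1 : HasDerivAt (fun x : ℝ => x) 1 u1 := hasDerivAt_id u1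
  have hx2 : HasDerivAt (fun x : ℝ => x) 1 u2 := hasDerivAt_id u2
  have hs1 : HasDerivAt (fun x : ℝ => x ^ 2) (2 * u1) u1 := by
    simpa using hasDerivAt_pow 2 u1
  have hs2 : HasDerivAt (fun x : ℝ => x ^ 2) (2 * u2) u2 := by
    simpa using hasDerivAt_pow 2 u2
  have hp1 : HasDerivAt (fun x : ℝ => x ^ 2) (2 * p1) p1 := by
    simpa using hasDerivAt_pow 2 p1
  have hp2 : HasDerivAt (fun x : ℝ => x ^ 2) (2 * p2) p2 := by
    simpa using hasDerivAt_pow 2 p2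
  -- partial derivatives of I1
  have e1u1 : deriv (fun x => drachI1mn α β γ m n x u2 p1 p2) u1 =
      -(2 * u1 * (p1 ^ 2 / m ^ 2 - p2 ^ 2 / n ^ 2) / (u1 ^ 2 - u2 ^ 2) ^ 2)
        - 2 * α * u1 - β * (u1 ^ 2 + 2 * u1 * u2) / (u1 + u2) ^ 2
        + γ / (u1 + u2) ^ 2 := by
    have h := ((((hasDerivAt_const u1 (p1 ^ 2 / m ^ 2 - p2 ^ 2 / n ^ 2)).div
        (hs1.sub_const (u2 ^ 2)) hD).sub ((hs1.add_const (u2 ^ 2)).const_mul α)).sub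
        ((((hs1.add (hx1.mul_const u2)).add_const (u2 ^ 2)).const_mul β).div
          (hx1.add_const u2) hsum)).sub
        ((hasDerivAt_const u1 γ).div (hx1.add_const u2) hsum)
    have h2 : HasDerivAt (fun x => drachI1mn α β γ m n x u2 p1 p2)
        (-(2 * u1 * (p1 ^ 2 / m ^ 2 - p2 ^ 2 / n ^ 2) / (u1 ^ 2 - u2 ^ 2) ^ 2)
          - 2 * α * u1 - β * (u1 ^ 2 + 2 * u1 * u2) / (u1 + u2) ^ 2
          + γ / (u1 + u2) ^ 2) u1 := by
      unfold drachI1mn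
      refine HasDerivAt.congr_deriv (h) ?_
      simp only [Pi.add_apply, Pi.sub_apply]
      field_simp
      ring
    exact h2.deriv
  have e1u2 : deriv (fun x => drachI1mn α β γ m n u1 x p1 p2) u2 =
      2 * u2 * (p1 ^ 2 / m ^ 2 - p2 ^ 2 / n ^ 2) / (u1 ^ 2 - u2 ^ 2) ^ 2
        - 2 * α * u2 - β * (u2 ^ 2 + 2 * u1 * u2) / (u1 + u2) ^ 2
        + γ / (u1 + u2) ^ 2 := by
    have h := ((((hasDerivAt_const u2 (p1 ^ 2 / m ^ 2 - p2 ^ 2 / n ^ 2)).div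
        ((hasDerivAt_const u2 (u1 ^ 2)).sub hs2) hD).sub
        ((hs2.const_add (u1 ^ 2)).const_mul α)).sub
        (((((hx2.const_mul u1).const_add (u1 ^ 2)).add hs2).const_mul β).div
          (hx2.const_add u1) hsum)).sub
        ((hasDerivAt_const u2 γ).div (hx2.const_add u1) hsum)
    have h2 : HasDerivAt (fun x => drachI1mn α β γ m n u1 x p1 p2)
        (2 * u2 * (p1 ^ 2 / m ^ 2 - p2 ^ 2 / n ^ 2) / (u1 ^ 2 - u2 ^ 2) ^ 2
          - 2 * α * u2 - β * (u2 ^ 2 + 2 * u1 * u2) / (u1 + u2) ^ 2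
          + γ / (u1 + u2) ^ 2) u2 := by
      unfold drachI1mn
      refine HasDerivAt.congr_deriv (h) ?_
      simp only [Pi.add_apply, Pi.sub_apply]
      field_simp
      ring
    exact h2.deriv
  have e1p1 : deriv (fun x => drachI1mn α β γ m n u1 u2 x p2) p1 =
      2 * p1 / (m ^ 2 * (u1 ^ 2 - u2 ^ 2)) := by
    have h := ((((hp1.div_const (m ^ 2)).sub_const (p2 ^ 2 / n ^ 2)).div_const
        (u1 ^ 2 - u2 ^ 2)).sub_const (α * (u1 ^ 2 + u2 ^ 2))).sub_const
        (β * (u1 ^ 2 + u1 * u2 + u2 ^ 2) / (u1 + u2))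
    have h2 : HasDerivAt (fun x => drachI1mn α β γ m n u1 u2 x p2)
        (2 * p1 / (m ^ 2 * (u1 ^ 2 - u2 ^ 2))) p1 := by
      unfold drachI1mn
      refine HasDerivAt.congr_deriv (h.sub_const (γ / (u1 + u2))) ?_
      field_simp
    exact h2.deriv
  have e1p2 : deriv (fun x => drachI1mn α β γ m n u1 u2 p1 x) p2 =
      -(2 * p2 / (n ^ 2 * (u1 ^ 2 - u2 ^ 2))) := by
    have h := ((((hasDerivAt_const p2 (p1 ^ 2 / m ^ 2)).sub
        (hp2.div_const (n ^ 2))).div_const (u1 ^ 2 - u2 ^ 2)).sub_const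
        (α * (u1 ^ 2 + u2 ^ 2))).sub_const
        (β * (u1 ^ 2 + u1 * u2 + u2 ^ 2) / (u1 + u2))
    have h2 : HasDerivAt (fun x => drachI1mn α β γ m n u1 u2 p1 x)
        (-(2 * p2 / (n ^ 2 * (u1 ^ 2 - u2 ^ 2)))) p2 := by
      unfold drachI1mn
      refine HasDerivAt.congr_deriv (h.sub_const (γ / (u1 + u2))) ?_
      field_simp
      ring
    exact h2.deriv
  -- partial derivatives of I2
  have e2u1 : deriv (fun x => drachI2mn α β γ m n x u2 p1 p2) u1 =
      -(2 * u1 * u2 ^ 2 * (p1 ^ 2 / m ^ 2 - p2 ^ 2 / n ^ 2) / (u1 ^ 2 - u2 ^ 2) ^ 2)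
        - 2 * α * u1 * u2 ^ 2 - β * u1 * u2 ^ 2 * (u1 + 2 * u2) / (u1 + u2) ^ 2
        + γ * u2 ^ 2 / (u1 + u2) ^ 2 := by
    have h := (((((hasDerivAt_const u1 (u2 ^ 2 * p1 ^ 2 / m ^ 2)).sub
        ((hs1.mul_const (p2 ^ 2)).div_const (n ^ 2))).div
        (hs1.sub_const (u2 ^ 2)) hD).sub
        ((hs1.const_mul α).mul_const (u2 ^ 2))).sub
        (((hs1.const_mul β).mul_const (u2 ^ 2)).div (hx1.add_const u2) hsum)).add
        (((hx1.const_mul γ).mul_const u2).div (hx1.add_const u2) hsum)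
    have h2 : HasDerivAt (fun x => drachI2mn α β γ m n x u2 p1 p2)
        (-(2 * u1 * u2 ^ 2 * (p1 ^ 2 / m ^ 2 - p2 ^ 2 / n ^ 2) / (u1 ^ 2 - u2 ^ 2) ^ 2)
          - 2 * α * u1 * u2 ^ 2 - β * u1 * u2 ^ 2 * (u1 + 2 * u2) / (u1 + u2) ^ 2
          + γ * u2 ^ 2 / (u1 + u2) ^ 2) u1 := by
      unfold drachI2mn
      refine HasDerivAt.congr_deriv (h) ?_
      simp only [Pi.add_apply, Pi.sub_apply]
      field_simp
      ring
    exact h2.deriv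
  have e2u2 : deriv (fun x => drachI2mn α β γ m n u1 x p1 p2) u2 =
      2 * u1 ^ 2 * u2 * (p1 ^ 2 / m ^ 2 - p2 ^ 2 / n ^ 2) / (u1 ^ 2 - u2 ^ 2) ^ 2
        - 2 * α * u1 ^ 2 * u2 - β * u1 ^ 2 * u2 * (2 * u1 + u2) / (u1 + u2) ^ 2
        + γ * u1 ^ 2 / (u1 + u2) ^ 2 := by
    have h := (((((((hs2.mul_const (p1 ^ 2)).div_const (m ^ 2)).sub_const
        (u1 ^ 2 * p2 ^ 2 / n ^ 2)).div
        ((hasDerivAt_const u2 (u1 ^ 2)).sub hs2) hD).sub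
        (hs2.const_mul (α * u1 ^ 2))).sub
        ((hs2.const_mul (β * u1 ^ 2)).div (hx2.const_add u1) hsum)).add
        ((hx2.const_mul (γ * u1)).div (hx2.const_add u1) hsum))
    have h2 : HasDerivAt (fun x => drachI2mn α β γ m n u1 x p1 p2)
        (2 * u1 ^ 2 * u2 * (p1 ^ 2 / m ^ 2 - p2 ^ 2 / n ^ 2) / (u1 ^ 2 - u2 ^ 2) ^ 2
          - 2 * α * u1 ^ 2 * u2 - β * u1 ^ 2 * u2 * (2 * u1 + u2) / (u1 + u2) ^ 2
          + γ * u1 ^ 2 / (u1 + u2) ^ 2) u2 := by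
      unfold drachI2mn
      refine HasDerivAt.congr_deriv (h) ?_
      simp only [Pi.add_apply, Pi.sub_apply]
      field_simp
      ring
    exact h2.deriv
  have e2p1 : deriv (fun x => drachI2mn α β γ m n u1 u2 x p2) p1 =
      2 * u2 ^ 2 * p1 / (m ^ 2 * (u1 ^ 2 - u2 ^ 2)) := by
    have h := (((((hp1.const_mul (u2 ^ 2)).div_const (m ^ 2)).sub_const
        (u1 ^ 2 * p2 ^ 2 / n ^ 2)).div_const (u1 ^ 2 - u2 ^ 2)).sub_const
        (α * u1 ^ 2 * u2 ^ 2)).sub_const (β * u1 ^ 2 * u2 ^ 2 / (u1 + u2))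
    have h2 : HasDerivAt (fun x => drachI2mn α β γ m n u1 u2 x p2)
        (2 * u2 ^ 2 * p1 / (m ^ 2 * (u1 ^ 2 - u2 ^ 2))) p1 := by
      unfold drachI2mn
      refine HasDerivAt.congr_deriv (h.add_const (γ * u1 * u2 / (u1 + u2))) ?_
      field_simp
    exact h2.deriv
  have e2p2 : deriv (fun x => drachI2mn α β γ m n u1 u2 p1 x) p2 =
      -(2 * u1 ^ 2 * p2 / (n ^ 2 * (u1 ^ 2 - u2 ^ 2))) := by
    have h := ((((hasDerivAt_const p2 (u2 ^ 2 * p1 ^ 2 / m ^ 2)).sub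
        ((hp2.const_mul (u1 ^ 2)).div_const (n ^ 2))).div_const
        (u1 ^ 2 - u2 ^ 2)).sub_const (α * u1 ^ 2 * u2 ^ 2)).sub_const
        (β * u1 ^ 2 * u2 ^ 2 / (u1 + u2))
    have h2 : HasDerivAt (fun x => drachI2mn α β γ m n u1 u2 p1 x)
        (-(2 * u1 ^ 2 * p2 / (n ^ 2 * (u1 ^ 2 - u2 ^ 2)))) p2 := by
      unfold drachI2mn
      refine HasDerivAt.congr_deriv (h.add_const (γ * u1 * u2 / (u1 + u2))) ?_
      field_simp
      ring
    exact h2.deriv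
  rw [poissonBracket, e1u1, e1u2, e1p1, e1p2, e2u1, e2u2, e2p1, e2p2]
  field_simp
  ring
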